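/- For every even n ≥ 4 there exists a balanced bipartite graph B on 2n vertices with minimum degree at least n/2 + 1 and a vertex subset S with |S| = n + 1 such that B[S] is a forest and min(|S ∩ V1|, |S ∩ V2|) = n/2. -/

import Mathlib

open Finset SimpleGraph

private lemma cycle_at_max {V : Type*} {G : SimpleGraph V} (f : V → ℕ)
    (hinj : Function.Injective f)
    (hadj : ∀ u v, G.Adj u v → f u + 1 = f v ∨ f v + 1 = f u)
    {x : V} (c : G.Walk x x) (hc : c.IsCycle)
    (hmax : ∀ y ∈ c.support, f y ≤ f x) : False := by
  cases c with
  | nil => exact hc.not_of_nil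
  | @cons _ y _ h q =>
    have hlen : 3 ≤ q.length + 1 := by simpa using hc.three_le_length
    rw [SimpleGraph.Walk.cons_isCycle_iff] at hc
    obtain ⟨hq, he⟩ := hc
    have hqn : ¬ q.reverse.Nil := by
      rw [Walk.nil_iff_length_eq, Walk.length_reverse]; omega
    obtain ⟨z, h2, r, hr⟩ := Walk.not_nil_iff.mp hqn
    have hez : s(x, z) ∈ q.edges := by
      rw [← List.mem_reverse, ← Walk.edges_reverse, hr]; simp
    have hy : y ∈ (Walk.cons h q).support := by simp
    have hz : z ∈ (Walk.cons h q).support := by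
      have : z ∈ q.reverse.support := by rw [hr]; simp
      rw [Walk.support_reverse, List.mem_reverse] at this
      simp [this]
    have h1 := hadj x y h
    have h3 := hadj x z h2
    have hyx : f y ≠ f x := fun e => h.ne' (hinj e)
    have hzx : f z ≠ f x := fun e => h2.ne' (hinj e)
    have := hmax y hy
    have := hmax z hz
    have : f y = f z := by omega
    exact he (hinj this ▸ hez)

private lemma acyclic_of_label {V : Type*} {G : SimpleGraph V} (f : V → ℕ)
    (hinj : Function.Injective f)
    (hadj : ∀ u v, G.Adj u v → f u + 1 = f v ∨ f v + 1 = f u) :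
    G.IsAcyclic := by
  classical
  intro v c hc
  obtain ⟨x, hx, hmax⟩ := Finset.exists_max_image c.support.toFinset f
    ⟨v, by simp [Walk.start_mem_support]⟩
  simp only [List.mem_toFinset] at hx hmax
  refine cycle_at_max f hinj hadj (c.rotate x hx) (hc.rotate hx) ?_
  intro y hy
  rcases (by rw [(c.rotate x hx).support_eq_cons] at hy; simpa only [List.mem_cons] using hy :
      y = x ∨ y ∈ (c.rotate x hx).support.tail) with rfl | hy'
  · exact le_refl _
  · exact hmax y (c.support_eq_cons ▸ List.mem_cons_of_mem _
      ((c.support_rotate x hx).mem_iff.mp hy'))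

private abbrev rel10 (n m : ℕ) (u v : Fin (2*n)) : Prop :=
  u.val < n ∧ n ≤ v.val ∧
    (m ≤ u.val ∨ n + m < v.val ∨ v.val = n + u.val ∨ v.val = n + u.val + 1)

private def G10 (n m : ℕ) : SimpleGraph (Fin (2*n)) := SimpleGraph.fromRel (rel10 n m)

private instance instG10 (n m : ℕ) : DecidableRel (G10 n m).Adj := fun u v =>
  decidable_of_iff' _ (SimpleGraph.fromRel_adj (rel10 n m) u v)

private lemma G10_adj (n m : ℕ) (u v : Fin (2*n)) :
    (G10 n m).Adj u v ↔ u ≠ v ∧ (rel10 n m u v ∨ rel10 n m v u) :=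
  SimpleGraph.fromRel_adj _ _ _

private lemma deg_aux (n m : ℕ) (v : Fin (2*n)) (t : Finset ℕ)
    (ht : ∀ x ∈ t, x < 2*n) (hcard : m + 1 ≤ t.card)
    (hadj : ∀ x (hx : x < 2*n), x ∈ t → (G10 n m).Adj v ⟨x, hx⟩) :
    m + 1 ≤ (G10 n m).degree v := by
  calc m + 1 ≤ t.card := hcard
    _ = (t.attachFin ht).card := (Finset.card_attachFin t ht).symm
    _ ≤ (G10 n m).degree v := by
        rw [← SimpleGraph.card_neighborFinset_eq_degree]
        apply Finset.card_le_card
        intro x hx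
        rw [SimpleGraph.mem_neighborFinset]
        rw [Finset.mem_attachFin] at hx
        simpa using hadj x.val x.isLt hx

private lemma deg10 (n m : ℕ) (hm : n = 2*m) (hm2 : 2 ≤ m) (v : Fin (2*n)) :
    m + 1 ≤ (G10 n m).degree v := by
  rcases lt_or_ge v.val m with h1 | h1
  · refine deg_aux n m v
      (insert (n+v.val) (insert (n+v.val+1) (Finset.Ico (n+m+1) (2*n)))) ?_ ?_ ?_
    · intro x hx; simp only [Finset.mem_insert, Finset.mem_Ico] at hx; omega
    · rw [Finset.card_insert_of_notMem (by simp; omega),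
        Finset.card_insert_of_notMem (by simp; omega), Nat.card_Ico]
      omega
    · intro x hx hxt
      simp only [Finset.mem_insert, Finset.mem_Ico] at hxt
      rw [G10_adj]
      refine ⟨by rw [ne_eq, Fin.ext_iff]; simp; omega, Or.inl ?_⟩
      simp only [rel10]; omega
  · rcases lt_or_ge v.val n with h2 | h2
    · refine deg_aux n m v (Finset.Ico n (n+m+1)) ?_ ?_ ?_
      · intro x hx; simp only [Finset.mem_Ico] at hx; omega
      · rw [Nat.card_Ico]; omega
      · intro x hx hxt
        simp only [Finset.mem_Ico] at hxt
        rw [G10_adj]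
        refine ⟨by rw [ne_eq, Fin.ext_iff]; simp; omega, Or.inl ?_⟩
        simp only [rel10]; omega
    · rcases le_or_gt v.val (n+m) with h3 | h3
      · refine deg_aux n m v
          (insert (if v.val = n then 0 else v.val - n - 1) (Finset.Ico m n)) ?_ ?_ ?_
        · intro x hx; simp only [Finset.mem_insert, Finset.mem_Ico] at hx
          rcases hx with hx | hx
          · split at hx <;> omega
          · omega
        · rw [Finset.card_insert_of_notMem (by simp; split <;> omega), Nat.card_Ico]
          omega
        · intro x hx hxt
          simp only [Finset.mem_insert, Finset.mem_Ico] at hxt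
          rw [G10_adj]
          refine ⟨by rw [ne_eq, Fin.ext_iff]; simp; split at hxt <;> omega, Or.inr ?_⟩
          simp only [rel10]
          rcases hxt with hxt | hxt
          · split at hxt <;> omega
          · omega
      · refine deg_aux n m v (Finset.range (m+1)) ?_ ?_ ?_
        · intro x hx; simp only [Finset.mem_range] at hx; omega
        · rw [Finset.card_range]
        · intro x hx hxt
          simp only [Finset.mem_range] at hxt
          rw [G10_adj]
          refine ⟨by rw [ne_eq, Fin.ext_iff]; simp; omega, Or.inr ?_⟩
          simp only [rel10]; omega

theorem stmt10 (n : ℕ) (hn : 4 ≤ n) (heven : Even n) :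
    ∃ (G : SimpleGraph (Fin (2 * n))) (_ : DecidableRel G.Adj)
      (V1 V2 : Finset (Fin (2 * n))),
      Disjoint V1 V2 ∧ V1 ∪ V2 = Finset.univ ∧ V1.card = n ∧ V2.card = n ∧
      (∀ u v, G.Adj u v → (u ∈ V1 ∧ v ∈ V2) ∨ (u ∈ V2 ∧ v ∈ V1)) ∧
      (∀ v, n + 2 ≤ 2 * G.degree v) ∧
      ∃ S : Finset (Fin (2 * n)), S.card = n + 1 ∧
        (G.induce (S : Set (Fin (2 * n)))).IsAcyclic ∧
        2 * min (S ∩ V1).card (S ∩ V2).card = n := by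
  obtain ⟨m, hm⟩ : ∃ m, n = 2 * m := by obtain ⟨r, hr⟩ := heven; exact ⟨r, by omega⟩
  have hm2 : 2 ≤ m := by omega
  have hS : ∀ x ∈ Finset.range m ∪ Finset.Icc n (n+m), x < 2*n := by
    intro x hx
    simp only [Finset.mem_union, Finset.mem_range, Finset.mem_Icc] at hx; omega
  refine ⟨G10 n m, instG10 n m,
    Finset.univ.filter (fun v => v.val < n),
    Finset.univ.filter (fun v => n ≤ v.val), ?_, ?_, ?_, ?_, ?_, ?_,
    Finset.attachFin (Finset.range m ∪ Finset.Icc n (n+m)) hS, ?_, ?_, ?_⟩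
  · rw [Finset.disjoint_left]; intro a ha hb
    simp only [Finset.mem_filter] at ha hb; omega
  · ext a; simp only [Finset.mem_union, Finset.mem_filter, Finset.mem_univ, true_and,
      iff_true]; omega
  · have : Finset.univ.filter (fun v : Fin (2*n) => v.val < n)
        = Finset.attachFin (Finset.range n) (fun x hx => by simp at hx; omega) := by
      ext a; simp [Finset.mem_attachFin]
    rw [this, Finset.card_attachFin, Finset.card_range]
  · have : Finset.univ.filter (fun v : Fin (2*n) => n ≤ v.val)
        = Finset.attachFin (Finset.Ico n (2*n)) (fun x hx => by simp at hx; omega) := by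
      ext a; simp [Finset.mem_attachFin, a.isLt]
    rw [this, Finset.card_attachFin, Nat.card_Ico]; omega
  · intro u v h
    rw [G10_adj] at h
    obtain ⟨-, h | h⟩ := h
    · left; simp only [Finset.mem_filter, Finset.mem_univ, true_and]
      exact ⟨h.1, h.2.1⟩
    · right; simp only [Finset.mem_filter, Finset.mem_univ, true_and]
      exact ⟨h.2.1, h.1⟩
  · intro v
    have := deg10 n m hm hm2 v
    omega
  · rw [Finset.card_attachFin, Finset.card_union_of_disjoint, Finset.card_range,
      Nat.card_Icc]
    · omega
    · rw [Finset.disjoint_left]; intro a ha hb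
      simp only [Finset.mem_range] at ha; simp only [Finset.mem_Icc] at hb; omega
  · have hmem : ∀ a : {x // x ∈ ((Finset.attachFin (Finset.range m ∪ Finset.Icc n (n+m)) hS : Finset (Fin (2*n))) : Set (Fin (2*n)))},
        (a : Fin (2*n)).val < m ∨ (n ≤ (a : Fin (2*n)).val ∧ (a : Fin (2*n)).val ≤ n + m) := by
      intro a
      have := a.2
      simp only [Finset.coe_sort_coe, Finset.mem_coe, Finset.mem_attachFin,
        Finset.mem_union, Finset.mem_range, Finset.mem_Icc] at this
      exact this
    refine acyclic_of_label
      (fun a => if (a : Fin (2*n)).val < n then 2 * (a : Fin (2*n)).val + 1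
        else 2 * ((a : Fin (2*n)).val - n)) ?_ ?_
    · intro a b hab
      have ha := hmem a; have hb := hmem b
      simp only at hab
      apply Subtype.ext; apply Fin.ext
      split_ifs at hab <;> omega
    · intro u v h
      have hu := hmem u; have hv := hmem v
      rw [SimpleGraph.comap_adj, Function.Embedding.coe_subtype, G10_adj] at h
      obtain ⟨-, h | h⟩ := h <;>
      · simp only [rel10] at h
        split_ifs <;> omega
  · have e1 : Finset.attachFin (Finset.range m ∪ Finset.Icc n (n+m)) hS ∩
        Finset.univ.filter (fun v => v.val < n)
        = Finset.attachFin (Finset.range m) (fun x hx => by simp at hx; omega) := by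
      ext a
      simp only [Finset.mem_inter, Finset.mem_attachFin, Finset.mem_filter, Finset.mem_univ,
        true_and, Finset.mem_union, Finset.mem_range, Finset.mem_Icc]
      omega
    have e2 : Finset.attachFin (Finset.range m ∪ Finset.Icc n (n+m)) hS ∩
        Finset.univ.filter (fun v => n ≤ v.val)
        = Finset.attachFin (Finset.Icc n (n+m)) (fun x hx => by simp at hx; omega) := by
      ext a
      simp only [Finset.mem_inter, Finset.mem_attachFin, Finset.mem_filter, Finset.mem_univ,
        true_and, Finset.mem_union, Finset.mem_range, Finset.mem_Icc]
      omega
    rw [e1, e2, Finset.card_attachFin, Finset.card_attachFin, Finset.card_range, Nat.card_Icc]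
    omega
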